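/- arXiv:2308.13258 — 2 statements merged into one kernel-verified Lean document; each statement's English description precedes it below -/
import Mathlib

section
/- Moyal product of Fourier modes: for f, g ∈ ℂ[[x,ε,μ]] and a, b ∈ ℤ, one has (f e^{iay}) * (g e^{iby}) = (e^{−(b/2)εμ∂_x} f) · (e^{(a/2)εμ∂_x} g) · e^{i(a+b)y}, where e^{cεμ∂_x} := Σ_{k≥0} (cεμ)^k ∂_x^k / k! for c ∈ ℂ. -/
/-! The ring `B := ℂ[[x, ε, μ]]` (variable `0` is `x`, variable `1` is `ε`, variable `2`
is `μ`), formal Fourier modes `f·e^{iay}` on which `∂_x` acts as `d/dx` and `∂_y` acts as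
multiplication by `ia`, and the Moyal star-product on such modes. A formal Fourier series
`Σ_{a∈ℤ} f^a e^{iay}` is encoded as the function `ℤ → B`, `a ↦ f^a`. -/

/-- The ring `B := ℂ[[x, ε, μ]]`. -/
abbrev Bxem : Type := MvPowerSeries (Fin 3) ℂ

/-- The derivation `∂_x = d/dx` on `B = ℂ[[x,ε,μ]]`. -/
noncomputable def dB (f : Bxem) : Bxem := fun m =>
  ((m 0 + 1 : ℕ) : ℂ) * f (m + Finsupp.single 0 1)

/-- Moyal star-product of two Fourier modes: the coefficient (in `B`) of `e^{i(a+b)y}` in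
`(f e^{iay}) * (g e^{iby})`.  It is given by the sum
`Σ_{k₁,k₂≥0} ((−1)^{k₂} i^{k₁+k₂} (ia)^{k₂} (ib)^{k₁} / (2^{k₁+k₂} k₁! k₂!))
(εμ)^{k₁+k₂} (∂_x^{k₁} f)(∂_x^{k₂} g)`, where `∂_y` has been evaluated as `ia` resp. `ib`
on the two modes.  It is defined coefficientwise: the `(k₁,k₂)`-summand is divisible by
`(εμ)^{k₁+k₂}`, so its coefficient at a monomial `m` vanishes unless `k₁+k₂ ≤ m(ε)`. -/
noncomputable def moyalMode (f g : Bxem) (a b : ℤ) : Bxem := fun m =>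
  ∑ p ∈ Finset.range (m 1 + 1) ×ˢ Finset.range (m 1 + 1),
    ((((-1 : ℂ) ^ p.2 * Complex.I ^ (p.1 + p.2) * (Complex.I * (a : ℂ)) ^ p.2 *
        (Complex.I * (b : ℂ)) ^ p.1) / (2 ^ (p.1 + p.2) * p.1.factorial * p.2.factorial)) •
      ((MvPowerSeries.X 1 * MvPowerSeries.X 2 : Bxem) ^ (p.1 + p.2) *
        (dB^[p.1] f) * (dB^[p.2] g))) m

/-- The Moyal star-product of two formal Fourier series `F = Σ F^a e^{iay}` and
`G = Σ G^a e^{iay}`: the mode-`a` coefficient is `Σ_{a₁+a₂=a} (F^{a₁}e^{ia₁y})*(G^{a₂}e^{ia₂y})`,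
the (coefficientwise) sum being taken over all pairs `(a₁,a₂)` with `a₁+a₂=a`. -/
noncomputable def fstar (F G : ℤ → Bxem) : ℤ → Bxem := fun a => fun m =>
  ∑' p : {p : ℤ × ℤ // p.1 + p.2 = a}, moyalMode (F p.1.1) (G p.1.2) p.1.1 p.1.2 m

/-- The operator `e^{cεμ∂_x} := Σ_{k≥0} (cεμ)^k ∂_x^k / k!` on `B`, defined
coefficientwise (the `k`-th summand is divisible by `ε^k`). -/
noncomputable def expOp (c : ℂ) (f : Bxem) : Bxem := fun m =>
  ∑ k ∈ Finset.range (m 1 + 1),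
    ((c ^ k / k.factorial) • ((MvPowerSeries.X 1 * MvPowerSeries.X 2 : Bxem) ^ k * dB^[k] f)) m

/-- The single Fourier mode `f e^{iay}`, as a formal Fourier series. -/
noncomputable def fsingle (a : ℤ) (f : Bxem) : ℤ → Bxem := fun c =>
  if c = a then f else 0


lemma Bxem.smul_apply' (c : ℂ) (φ : Bxem) (n : Fin 3 →₀ ℕ) : (c • φ) n = c * φ n := rfl

lemma Bxem.mul_apply' (f g : Bxem) (m : Fin 3 →₀ ℕ) :
    (f * g) m = ∑ p ∈ Finset.HasAntidiagonal.antidiagonal m, f p.1 * g p.2 := by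
  rw [← MvPowerSeries.coeff_apply (σ := Fin 3) (R := ℂ) (f * g) m, MvPowerSeries.coeff_mul]; rfl

lemma aux_vanish (h : Bxem) (k : ℕ) (m : Fin 3 →₀ ℕ) (hm : m 1 < k) :
    ((MvPowerSeries.X 1 * MvPowerSeries.X 2 : Bxem) ^ k * h) m = 0 := by
  have hP : (MvPowerSeries.X 1 * MvPowerSeries.X 2 : Bxem) ^ k
      = MvPowerSeries.monomial (Finsupp.single 1 k + Finsupp.single 2 k) 1 := by
    rw [mul_pow, MvPowerSeries.X_pow_eq, MvPowerSeries.X_pow_eq,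
      MvPowerSeries.monomial_mul_monomial, one_mul]
  have h0 : MvPowerSeries.coeff m
      ((MvPowerSeries.X 1 * MvPowerSeries.X 2 : Bxem) ^ k * h) = 0 := by
    rw [hP, MvPowerSeries.coeff_monomial_mul, if_neg]
    intro hle
    have h1 := hle 1
    simp [Finsupp.single_apply] at h1
    omega
  simpa [MvPowerSeries.coeff_apply] using h0

lemma dB_iter_zero (k : ℕ) : dB^[k] (0 : Bxem) = 0 := by
  induction k with
  | zero => rfl
  | succ n ih =>
    rw [Function.iterate_succ_apply,
      show dB 0 = 0 from funext fun m => by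
        simp only [dB, show (0 : Bxem) (m + Finsupp.single 0 1) = 0 from rfl, mul_zero]; rfl,
      ih]

lemma moyal_zero_left (g : Bxem) (a b : ℤ) : moyalMode 0 g a b = 0 := by
  funext m
  refine Finset.sum_eq_zero fun p _ => ?_
  rw [dB_iter_zero, mul_zero, zero_mul, smul_zero]; rfl

lemma moyal_zero_right (f : Bxem) (a b : ℤ) : moyalMode f 0 a b = 0 := by
  funext m
  refine Finset.sum_eq_zero fun p _ => ?_
  rw [dB_iter_zero, mul_zero, smul_zero]; rfl

lemma scalar_id (a b : ℂ) (k₁ k₂ : ℕ) :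
    ((-1 : ℂ) ^ k₂ * Complex.I ^ (k₁ + k₂) * (Complex.I * a) ^ k₂ * (Complex.I * b) ^ k₁) /
      (2 ^ (k₁ + k₂) * k₁.factorial * k₂.factorial)
    = ((-b / 2) ^ k₁ / k₁.factorial) * ((a / 2) ^ k₂ / k₂.factorial) := by
  have key : (-1 : ℂ) ^ k₂ * Complex.I ^ (k₁ + k₂) * (Complex.I * a) ^ k₂ *
      (Complex.I * b) ^ k₁ = (-1 : ℂ) ^ k₁ * a ^ k₂ * b ^ k₁ := by
    have e1 : Complex.I ^ (k₁ + k₂) * (Complex.I * a) ^ k₂ * (Complex.I * b) ^ k₁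
        = (Complex.I * Complex.I) ^ (k₁ + k₂) * (a ^ k₂ * b ^ k₁) := by
      rw [mul_pow Complex.I a, mul_pow Complex.I b, mul_pow Complex.I Complex.I, pow_add]
      ring
    calc (-1 : ℂ) ^ k₂ * Complex.I ^ (k₁ + k₂) * (Complex.I * a) ^ k₂ * (Complex.I * b) ^ k₁
        = (-1 : ℂ) ^ k₂ * ((Complex.I * Complex.I) ^ (k₁ + k₂) * (a ^ k₂ * b ^ k₁)) := by
          rw [← e1]; ring
      _ = (-1 : ℂ) ^ k₂ * ((-1 : ℂ) ^ (k₁ + k₂) * (a ^ k₂ * b ^ k₁)) := by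
          rw [Complex.I_mul_I]
      _ = ((-1 : ℂ) ^ k₂ * (-1 : ℂ) ^ k₂) * (-1 : ℂ) ^ k₁ * (a ^ k₂ * b ^ k₁) := by
          rw [pow_add]; ring
      _ = (-1 : ℂ) ^ k₁ * a ^ k₂ * b ^ k₁ := by
          rw [← pow_add, ← two_mul, pow_mul, neg_one_sq, one_pow]; ring
  rw [key]
  have h1 : (k₁.factorial : ℂ) ≠ 0 := Nat.cast_ne_zero.mpr k₁.factorial_ne_zero
  have h2 : (k₂.factorial : ℂ) ≠ 0 := Nat.cast_ne_zero.mpr k₂.factorial_ne_zero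
  field_simp [pow_add]
  have e3 : ((-1/2:ℂ))^k₁ * 2^k₁ = (-1)^k₁ := by rw [← mul_pow]; norm_num
  have e4 : ((1/2:ℂ))^k₂ * 2^k₂ = 1 := by rw [← mul_pow]; norm_num
  linear_combination (-(a^k₂*b^k₁*(1/2:ℂ)^k₂*2^k₂)) * e3 - (a^k₂*b^k₁*(-1:ℂ)^k₁) * e4

lemma expOp_eval (c : ℂ) (h : Bxem) (n : Fin 3 →₀ ℕ) (N : ℕ) (hN : n 1 < N) :
    expOp c h n = ∑ k ∈ Finset.range N,
      ((c ^ k / k.factorial) • ((MvPowerSeries.X 1 * MvPowerSeries.X 2 : Bxem) ^ k * dB^[k] h)) n := by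
  refine Finset.sum_subset (Finset.range_subset_range.mpr hN) fun k _ hk => ?_
  simp only [Finset.mem_range, not_lt] at hk
  rw [Bxem.smul_apply', aux_vanish _ _ _ (by omega), mul_zero]

lemma moyal_eq (f g : Bxem) (a b : ℤ) :
    moyalMode f g a b = expOp (-(b : ℂ) / 2) f * expOp ((a : ℂ) / 2) g := by
  funext m
  rw [Bxem.mul_apply']
  calc moyalMode f g a b m
      = ∑ p ∈ Finset.range (m 1 + 1) ×ˢ Finset.range (m 1 + 1),
          ∑ q ∈ Finset.HasAntidiagonal.antidiagonal m,
            (((-(b : ℂ) / 2) ^ p.1 / p.1.factorial) •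
              ((MvPowerSeries.X 1 * MvPowerSeries.X 2 : Bxem) ^ p.1 * dB^[p.1] f)) q.1 *
            ((((a : ℂ) / 2) ^ p.2 / p.2.factorial) •
              ((MvPowerSeries.X 1 * MvPowerSeries.X 2 : Bxem) ^ p.2 * dB^[p.2] g)) q.2 := by
        refine Finset.sum_congr rfl fun p _ => ?_
        simp only [Bxem.smul_apply']
        have hser : ((MvPowerSeries.X 1 * MvPowerSeries.X 2 : Bxem) ^ p.1 * dB^[p.1] f) *
            ((MvPowerSeries.X 1 * MvPowerSeries.X 2 : Bxem) ^ p.2 * dB^[p.2] g)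
            = (MvPowerSeries.X 1 * MvPowerSeries.X 2 : Bxem) ^ (p.1 + p.2) *
              dB^[p.1] f * dB^[p.2] g := by
          rw [pow_add]; ring
        calc (((-1 : ℂ) ^ p.2 * Complex.I ^ (p.1 + p.2) * (Complex.I * (a : ℂ)) ^ p.2 *
              (Complex.I * (b : ℂ)) ^ p.1) / (2 ^ (p.1 + p.2) * p.1.factorial * p.2.factorial)) *
              (((MvPowerSeries.X 1 * MvPowerSeries.X 2 : Bxem) ^ (p.1 + p.2) *
                dB^[p.1] f * dB^[p.2] g) m)
            = ((-(b : ℂ) / 2) ^ p.1 / p.1.factorial) * (((a : ℂ) / 2) ^ p.2 / p.2.factorial) *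
              ((((MvPowerSeries.X 1 * MvPowerSeries.X 2 : Bxem) ^ p.1 * dB^[p.1] f) *
                ((MvPowerSeries.X 1 * MvPowerSeries.X 2 : Bxem) ^ p.2 * dB^[p.2] g)) m) := by
              rw [scalar_id, hser]
          _ = _ := by
              rw [Bxem.mul_apply', Finset.mul_sum]
              exact Finset.sum_congr rfl fun q _ => by ring
    _ = ∑ q ∈ Finset.HasAntidiagonal.antidiagonal m,
          ∑ p ∈ Finset.range (m 1 + 1) ×ˢ Finset.range (m 1 + 1),
            (((-(b : ℂ) / 2) ^ p.1 / p.1.factorial) •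
              ((MvPowerSeries.X 1 * MvPowerSeries.X 2 : Bxem) ^ p.1 * dB^[p.1] f)) q.1 *
            ((((a : ℂ) / 2) ^ p.2 / p.2.factorial) •
              ((MvPowerSeries.X 1 * MvPowerSeries.X 2 : Bxem) ^ p.2 * dB^[p.2] g)) q.2 :=
        Finset.sum_comm
    _ = ∑ q ∈ Finset.HasAntidiagonal.antidiagonal m, expOp (-(b : ℂ) / 2) f q.1 * expOp ((a : ℂ) / 2) g q.2 := by
        refine Finset.sum_congr rfl fun q hq => ?_
        rw [Finset.HasAntidiagonal.mem_antidiagonal] at hq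
        have h1 : q.1 1 < m 1 + 1 := by
          have := congrArg (fun r : Fin 3 →₀ ℕ => r 1) hq
          simp only [Finsupp.add_apply] at this
          omega
        have h2 : q.2 1 < m 1 + 1 := by
          have := congrArg (fun r : Fin 3 →₀ ℕ => r 1) hq
          simp only [Finsupp.add_apply] at this
          omega
        rw [expOp_eval _ _ _ _ h1, expOp_eval _ _ _ _ h2, Finset.sum_mul_sum,
          ← Finset.sum_product']

/-- Moyal product of Fourier modes: for `f, g ∈ ℂ[[x,ε,μ]]` and
`a, b ∈ ℤ` one has
`(f e^{iay}) * (g e^{iby}) = (e^{−(b/2)εμ∂_x} f) · (e^{(a/2)εμ∂_x} g) · e^{i(a+b)y}`. -/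
theorem moyal_fourier_modes (f g : Bxem) (a b : ℤ) :
    fstar (fsingle a f) (fsingle b g) =
      fsingle (a + b) (expOp (-(b : ℂ) / 2) f * expOp ((a : ℂ) / 2) g) := by
  funext c m
  show (∑' p : {p : ℤ × ℤ // p.1 + p.2 = c},
      moyalMode (fsingle a f p.1.1) (fsingle b g p.1.2) p.1.1 p.1.2 m)
    = fsingle (a + b) (expOp (-(b : ℂ) / 2) f * expOp ((a : ℂ) / 2) g) c m
  by_cases hc : c = a + b
  · subst hc
    rw [tsum_eq_single (⟨(a, b), rfl⟩ : {p : ℤ × ℤ // p.1 + p.2 = a + b})]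
    · show moyalMode (fsingle a f a) (fsingle b g b) a b m = _
      rw [show fsingle a f a = f from if_pos rfl, show fsingle b g b = g from if_pos rfl,
        moyal_eq, show fsingle (a + b) (expOp (-(b : ℂ) / 2) f * expOp ((a : ℂ) / 2) g) (a + b)
          = expOp (-(b : ℂ) / 2) f * expOp ((a : ℂ) / 2) g from if_pos rfl]
    · intro q hq
      rcases eq_or_ne q.1.1 a with h1 | h1
      · have h2 : q.1.2 ≠ b := fun h2 => hq (Subtype.ext (Prod.ext h1 h2))
        rw [show fsingle b g q.1.2 = 0 from if_neg h2, moyal_zero_right]; rfl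
      · rw [show fsingle a f q.1.1 = 0 from if_neg h1, moyal_zero_left]; rfl
  · have hall : ∀ p : {p : ℤ × ℤ // p.1 + p.2 = c},
        moyalMode (fsingle a f p.1.1) (fsingle b g p.1.2) p.1.1 p.1.2 m = 0 := by
      intro p
      rcases eq_or_ne p.1.1 a with h1 | h1
      · have h2 : p.1.2 ≠ b := fun h2 => hc (by rw [← p.2, h1, h2])
        rw [show fsingle b g p.1.2 = 0 from if_neg h2, moyal_zero_right]; rfl
      · rw [show fsingle a f p.1.1 = 0 from if_neg h1, moyal_zero_left]; rfl
    calc (∑' p : {p : ℤ × ℤ // p.1 + p.2 = c},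
        moyalMode (fsingle a f p.1.1) (fsingle b g p.1.2) p.1.1 p.1.2 m)
        = ∑' _ : {p : ℤ × ℤ // p.1 + p.2 = c}, (0 : ℂ) := tsum_congr hall
      _ = 0 := tsum_zero
      _ = fsingle (a + b) (expOp (-(b : ℂ) / 2) f * expOp ((a : ℂ) / 2) g) c m := by
          rw [show fsingle (a + b) (expOp (-(b : ℂ) / 2) f * expOp ((a : ℂ) / 2) g) c = 0
            from if_neg hc]; rfl
end

section
/- Counting weightings mod r: let Γ be a connected graph with legs, let r ≥ 1, and let a₁,…,a_n ∈ ℤ be leg values with a₁ + ⋯ + a_n ≡ 0 (mod r). Then the number of weightings mod r of Γ equals r^{h¹(Γ)}, where h¹(Γ) := |E| − |V| + 1. -/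
set_option linter.unusedSectionVars false

open Finset

namespace CountWeightings

variable {V H : Type} [Fintype V] [Fintype H] [DecidableEq V] [DecidableEq H]

/-- The boundary map. -/
def bdry (v : H → V) (r : ℕ) : (H → ZMod r) →+ (V → ZMod r) where
  toFun w := fun u => ∑ h ∈ Finset.univ.filter fun h => v h = u, w h
  map_zero' := by funext u; simp
  map_add' w w' := by funext u; simp [Finset.sum_add_distrib]

lemma bdry_apply (v : H → V) (r : ℕ) (w : H → ZMod r) (u : V) :
    bdry v r w u = ∑ h ∈ Finset.univ.filter fun h => v h = u, w h := rfl

lemma bdry_single (v : H → V) (r : ℕ) (h : H) (c : ZMod r) :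
    bdry v r (Pi.single h c) = Pi.single (v h) c := by
  funext u
  rw [bdry_apply]
  have : ∀ h' : H, (Pi.single h c : H → ZMod r) h' = if h' = h then c else 0 := by
    intro h'; simp [Pi.single_apply]
  simp only [this, Finset.sum_ite_eq', Finset.mem_filter, Finset.mem_univ, true_and,
    Pi.single_apply]
  by_cases hu : v h = u
  · simp [hu]
  · rw [if_neg hu, if_neg (fun he => hu he.symm)]

lemma bdry_smul (v : H → V) (r : ℕ) (c : ZMod r) (w : H → ZMod r) :
    bdry v r (c • w) = c • bdry v r w := by
  funext u
  simp [bdry_apply, Finset.mul_sum]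

/-- Antisymmetric weightings vanishing on fixed points. -/
def Asub (r : ℕ) (ι : H → H) : AddSubgroup (H → ZMod r) where
  carrier := {w | (∀ h, ι h ≠ h → w h + w (ι h) = 0) ∧ ∀ h, ι h = h → w h = 0}
  zero_mem' := by constructor <;> intro h _ <;> simp
  add_mem' := by
    rintro w w' ⟨hw1, hw2⟩ ⟨hw1', hw2'⟩
    refine ⟨fun h hh => ?_, fun h hh => ?_⟩
    · have := hw1 h hh; have := hw1' h hh
      simp only [Pi.add_apply]; linear_combination hw1 h hh + hw1' h hh
    · simp [hw2 h hh, hw2' h hh]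
  neg_mem' := by
    rintro w ⟨hw1, hw2⟩
    refine ⟨fun h hh => ?_, fun h hh => ?_⟩
    · simp only [Pi.neg_apply]; linear_combination - hw1 h hh
    · simp [hw2 h hh]

lemma mem_Asub {r : ℕ} {ι : H → H} {w : H → ZMod r} :
    w ∈ Asub r ι ↔ (∀ h, ι h ≠ h → w h + w (ι h) = 0) ∧ ∀ h, ι h = h → w h = 0 :=
  Iff.rfl

lemma smul_mem_Asub {r : ℕ} {ι : H → H} {w : H → ZMod r} (c : ZMod r)
    (hw : w ∈ Asub r ι) : c • w ∈ Asub r ι := by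
  refine ⟨fun h hh => ?_, fun h hh => ?_⟩
  · simp only [Pi.smul_apply, smul_eq_mul]; linear_combination c * hw.1 h hh
  · simp [hw.2 h hh]

/-- Sum over all vertices. -/
def sumHom (V : Type) [Fintype V] (r : ℕ) : (V → ZMod r) →+ ZMod r where
  toFun f := ∑ u, f u
  map_zero' := by simp
  map_add' f g := by simp [Finset.sum_add_distrib]

lemma bdry_mem_ker {r : ℕ} (v : H → V) {ι : H → H} (hι : Function.Involutive ι)
    {w : H → ZMod r} (hw : w ∈ Asub r ι) : bdry v r w ∈ (sumHom V r).ker := by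
  rw [AddMonoidHom.mem_ker]
  show ∑ u, bdry v r w u = 0
  simp only [bdry_apply]
  rw [Finset.sum_fiberwise Finset.univ v w]
  refine Finset.sum_involution (fun a _ => ι a) (fun a _ => ?_) (fun a _ hne => ?_)
    (fun a _ => Finset.mem_univ _) (fun a _ => hι a)
  · by_cases hfix : ι a = a
    · show w a + w (ι a) = 0; rw [hfix, hw.2 a hfix]; simp
    · exact hw.1 a hfix
  · intro hfix; exact hne (hw.2 a hfix)

/-- The restricted boundary map from `Asub` to the sum-zero functions. -/
def bdry' (v : H → V) (r : ℕ) {ι : H → H} (hι : Function.Involutive ι) :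
    ↥(Asub r ι) →+ ↥((sumHom V r).ker) :=
  AddMonoidHom.codRestrict ((bdry v r).comp (Asub r ι).subtype) _
    (fun w => bdry_mem_ker v hι w.2)

lemma bdry'_apply (v : H → V) (r : ℕ) {ι : H → H} (hι : Function.Involutive ι)
    (w : ↥(Asub r ι)) : ((bdry' v r hι w : V → ZMod r)) = bdry v r w.1 := rfl


lemma step_flow (v : H → V) (r : ℕ) {ι : H → H} (hι : Function.Involutive ι)
    {u u' : V}
    (hadj : (SimpleGraph.fromRel fun u u' : V => ∃ h : H, v h = u ∧ v (ι h) = u').Adj u u') :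
    ∃ w ∈ Asub r ι, bdry v r w = Pi.single u (1 : ZMod r) - Pi.single u' 1 := by
  rw [SimpleGraph.fromRel_adj] at hadj
  obtain ⟨hne, hrel⟩ := hadj
  have hrel' : ∃ h : H, v h = u ∧ v (ι h) = u' := by
    rcases hrel with h | h
    · exact h
    · obtain ⟨h, h1, h2⟩ := h
      exact ⟨ι h, h2, by rwa [hι h]⟩
  obtain ⟨h, h1, h2⟩ := hrel'
  have hfix : ι h ≠ h := fun he => hne (by rw [← h1, ← h2, he])
  refine ⟨Pi.single h (1 : ZMod r) - Pi.single (ι h) 1, ⟨?_, ?_⟩, ?_⟩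
  · intro g hg
    have e1 : (ι g = h) ↔ (g = ι h) := by
      constructor
      · intro e; rw [← e, hι]
      · intro e; rw [e, hι]
    have e2 : (ι g = ι h) ↔ (g = h) := hι.injective.eq_iff
    simp only [Pi.sub_apply, Pi.single_apply, e1, e2]
    ring
  · intro g hg
    have c1 : g ≠ h := by rintro rfl; exact hfix hg
    have c2 : g ≠ ι h := by
      rintro rfl
      have := hg; rw [hι] at this
      exact hfix this.symm
    simp [Pi.single_apply, c1, c2]
  · rw [map_sub, bdry_single, bdry_single, h1, h2]

lemma reach_flow (v : H → V) (r : ℕ) {ι : H → H} (hι : Function.Involutive ι)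
    (hconn : (SimpleGraph.fromRel fun u u' : V => ∃ h : H, v h = u ∧ v (ι h) = u').Connected)
    (u u' : V) :
    ∃ w ∈ Asub r ι, bdry v r w = Pi.single u (1 : ZMod r) - Pi.single u' 1 := by
  obtain ⟨p⟩ := hconn.preconnected u u'
  induction p with
  | nil => exact ⟨0, zero_mem _, by simp⟩
  | cons hadj p ih =>
    obtain ⟨w1, hw1, hb1⟩ := ih
    obtain ⟨w2, hw2, hb2⟩ := step_flow v r hι hadj
    refine ⟨w2 + w1, add_mem hw2 hw1, ?_⟩
    rw [map_add, hb1, hb2]; abel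

lemma bdry'_surj (v : H → V) (r : ℕ) {ι : H → H} (hι : Function.Involutive ι)
    (hconn : (SimpleGraph.fromRel fun u u' : V => ∃ h : H, v h = u ∧ v (ι h) = u').Connected) :
    Function.Surjective (bdry' v r hι) := by
  obtain ⟨u₀⟩ := hconn.nonempty
  rintro ⟨f, hf⟩
  rw [AddMonoidHom.mem_ker] at hf
  replace hf : ∑ u, f u = 0 := hf
  choose w hwA hwb using fun u => reach_flow v r hι hconn u u₀
  refine ⟨⟨∑ u, f u • w u, sum_mem fun u _ => smul_mem_Asub _ (hwA u)⟩, ?_⟩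
  apply Subtype.ext
  rw [bdry'_apply]
  show bdry v r (∑ u, f u • w u) = f
  rw [map_sum]
  funext x
  have key : ∀ u : V, bdry v r (f u • w u) = f u • (Pi.single u (1:ZMod r) - Pi.single u₀ 1) := by
    intro u; rw [bdry_smul, hwb u]
  simp only [key]
  rw [Finset.sum_apply]
  simp only [Pi.smul_apply, Pi.sub_apply, Pi.single_apply, smul_eq_mul, mul_sub,
    mul_ite, mul_one, mul_zero]
  rw [Finset.sum_sub_distrib]
  have h1 : (∑ u, if x = u then f u else 0) = f x := by
    rw [Finset.sum_ite_eq]; simp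
  have h2 : (∑ u : V, if x = u₀ then f u else 0) = 0 := by
    by_cases hx : x = u₀ <;> simp [hx, hf]
  rw [h1, h2, sub_zero]


noncomputable def eH (H : Type) [Fintype H] : H ≃ Fin (Fintype.card H) := Fintype.equivFin H

noncomputable def Sset (ι : H → H) : Finset H :=
  @Finset.filter _ (fun h => ι h ≠ h ∧ eH H h < eH H (ι h)) (Classical.decPred _) Finset.univ

lemma mem_Sset {ι : H → H} {h : H} : h ∈ Sset ι ↔ ι h ≠ h ∧ eH H h < eH H (ι h) := by
  simp [Sset]

lemma Sset_or {ι : H → H} (hι : Function.Involutive ι) {h : H} (hh : ι h ≠ h) :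
    h ∈ Sset ι ∨ ι h ∈ Sset ι := by
  rw [mem_Sset, mem_Sset, hι h]
  have hne : eH H h ≠ eH H (ι h) := fun e => hh ((eH H).injective e).symm
  rcases lt_or_gt_of_ne hne with hlt | hgt
  · exact Or.inl ⟨hh, hlt⟩
  · exact Or.inr ⟨fun e => hh e.symm, hgt⟩

lemma Sset_not_both {ι : H → H} (hι : Function.Involutive ι) {h : H}
    (h1 : h ∈ Sset ι) (h2 : ι h ∈ Sset ι) : False := by
  rw [mem_Sset] at h1 h2
  rw [hι h] at h2
  exact lt_asymm h1.2 h2.2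

lemma fixed_not_mem_Sset {ι : H → H} {h : H} (hfix : ι h = h) : h ∉ Sset ι := by
  rw [mem_Sset]; rintro ⟨c, -⟩; exact c hfix

noncomputable def recon (r : ℕ) (ι : H → H) (f : {x // x ∈ Sset ι} → ZMod r) : H → ZMod r :=
  fun h => if hS : h ∈ Sset ι then f ⟨h, hS⟩
    else if hS' : ι h ∈ Sset ι then -f ⟨ι h, hS'⟩ else 0

lemma recon_mem (r : ℕ) {ι : H → H} (hι : Function.Involutive ι)
    (f : {x // x ∈ Sset ι} → ZMod r) : recon r ι f ∈ Asub r ι := by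
  constructor
  · intro h hh
    rcases Sset_or hι hh with hS | hS
    · have hS' : ι h ∉ Sset ι := fun c => Sset_not_both hι hS c
      have hS'' : ι (ι h) ∈ Sset ι := by rw [hι]; exact hS
      simp only [recon]
      rw [dif_pos hS, dif_neg hS', dif_pos hS'']
      have : f ⟨ι (ι h), hS''⟩ = f ⟨h, hS⟩ := by congr 1; exact Subtype.ext (hι h)
      rw [this]; ring
    · have hS' : h ∉ Sset ι := fun c => Sset_not_both hι c hS
      simp only [recon]
      rw [dif_neg hS', dif_pos hS, dif_pos hS]
      ring
  · intro h hh
    have h1 : h ∉ Sset ι := fixed_not_mem_Sset hh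
    have h2 : ι h ∉ Sset ι := by rw [hh]; exact h1
    simp only [recon]
    rw [dif_neg h1, dif_neg h2]

noncomputable def AsubEquiv (r : ℕ) {ι : H → H} (hι : Function.Involutive ι) :
    ↥(Asub r ι) ≃ ({x // x ∈ Sset ι} → ZMod r) where
  toFun w := fun s => w.1 s.1
  invFun f := ⟨recon r ι f, recon_mem r hι f⟩
  left_inv := by
    rintro ⟨w, hw1, hw2⟩
    apply Subtype.ext
    funext h
    show recon r ι (fun s => w s.1) h = w h
    by_cases hS : h ∈ Sset ι
    · simp only [recon]; rw [dif_pos hS]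
    · by_cases hS' : ι h ∈ Sset ι
      · simp only [recon]; rw [dif_neg hS, dif_pos hS']
        have hh : ι h ≠ h := fun e => ((mem_Sset).1 hS').1 (by rw [e]; exact e)
        have hsum := hw1 h hh
        show -w (ι h) = w h
        linear_combination -hsum
      · have hfix : ι h = h := by
          by_contra hh
          rcases Sset_or hι hh with c | c
          · exact hS c
          · exact hS' c
        simp only [recon]; rw [dif_neg hS, dif_neg hS']
        exact (hw2 h hfix).symm
  right_inv := by
    intro f; funext s
    show recon r ι f s.1 = f s
    simp only [recon]; rw [dif_pos s.2]

lemma card_Asub (r : ℕ) {ι : H → H} (hι : Function.Involutive ι) :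
    Nat.card ↥(Asub r ι) = r ^ (Sset ι).card := by
  rw [Nat.card_congr (AsubEquiv r hι), Nat.card_fun, Nat.card_zmod]
  congr 1
  rw [Nat.card_eq_fintype_card, Fintype.card_coe]

lemma two_mul_card_Sset {ι : H → H} (hι : Function.Involutive ι) :
    (Finset.univ.filter fun h : H => ι h ≠ h).card = 2 * (Sset ι).card := by
  have himg : (Finset.univ.filter fun h : H => ι h ≠ h) = Sset ι ∪ (Sset ι).image ι := by
    ext h
    simp only [Finset.mem_filter, Finset.mem_univ, true_and, Finset.mem_union, Finset.mem_image]
    constructor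
    · intro hh
      rcases Sset_or hι hh with c | c
      · exact Or.inl c
      · exact Or.inr ⟨ι h, c, hι h⟩
    · rintro (c | ⟨g, hg, rfl⟩)
      · exact ((mem_Sset).1 c).1
      · have hg' := ((mem_Sset).1 hg).1
        rw [hι g]
        exact fun e => hg' e.symm
  have hdisj : Disjoint (Sset ι) ((Sset ι).image ι) := by
    rw [Finset.disjoint_left]
    intro h hS hImg
    rw [Finset.mem_image] at hImg
    obtain ⟨g, hg, rfl⟩ := hImg
    exact Sset_not_both hι hg hS
  rw [himg, Finset.card_union_of_disjoint hdisj,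
    Finset.card_image_of_injective _ hι.injective, two_mul]

end CountWeightings

open Finset CountWeightings

/-- Counting weightings mod `r`.  A graph with legs is given by a finite
set of vertices `V`, a finite set of half-edges `H` with a vertex assignment `v : H → V`
and an involution `ι : H → H`; the edges are the `2`-element orbits of `ι` (so the number
of edges is half the number of non-fixed half-edges) and the legs are the fixed points of
`ι`, enumerated as `l 0, …, l (n-1)`.  The graph obtained by joining `v h` and `v (ι h)`
for every edge is required to be connected.  Given `r ≥ 1` and leg values
`a₁,…,a_n ∈ ℤ` with `a₁ + ⋯ + a_n ≡ 0 (mod r)`, a weighting mod `r` is a function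
`w : H → ℤ/rℤ` with `w(lᵢ) = aᵢ`, `w(h) + w(ι h) = 0` for every edge `{h, ι h}`, and
`Σ_{h : v(h)=u} w(h) = 0` for every vertex `u`.  Then the number of weightings mod `r`
equals `r^{h¹(Γ)}`, where `h¹(Γ) = |E| − |V| + 1`. -/
theorem count_weightings_mod_r (V H : Type) [Fintype V] [Fintype H]
    [DecidableEq V] [DecidableEq H]
    (v : H → V) (ι : H → H) (hι : Function.Involutive ι)
    (hconn : (SimpleGraph.fromRel fun u u' : V => ∃ h : H, v h = u ∧ v (ι h) = u').Connected)
    (n : ℕ) (l : Fin n → H) (hlinj : Function.Injective l)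
    (hlegs : ∀ h : H, ι h = h ↔ ∃ i : Fin n, l i = h)
    (r : ℕ) (hr : 1 ≤ r) (a : Fin n → ℤ) (ha : ∑ i : Fin n, (a i : ZMod r) = 0) :
    Nat.card {w : H → ZMod r //
        (∀ i : Fin n, w (l i) = (a i : ZMod r)) ∧
        (∀ h : H, ι h ≠ h → w h + w (ι h) = 0) ∧
        (∀ u : V, ∑ h ∈ Finset.univ.filter fun h => v h = u, w h = 0)} =
      r ^ ((Finset.univ.filter fun h : H => ι h ≠ h).card / 2 + 1 - Fintype.card V) := by
  have hfix_l : ∀ i : Fin n, ι (l i) = l i := fun i => (hlegs (l i)).2 ⟨i, rfl⟩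
  -- the leg part
  set g : H → ZMod r := ∑ i : Fin n, Pi.single (l i) ((a i : ZMod r)) with hg
  have hg_leg : ∀ j : Fin n, g (l j) = (a j : ZMod r) := by
    intro j
    rw [hg, Finset.sum_apply]
    have h1 : ∀ i : Fin n, (Pi.single (l i) ((a i : ZMod r)) : H → ZMod r) (l j)
        = if j = i then (a i : ZMod r) else 0 := by
      intro i
      rw [Pi.single_apply]
      simp [hlinj.eq_iff]
    simp only [h1]
    rw [Finset.sum_ite_eq]
    simp
  have hg_nonfix : ∀ h, ι h ≠ h → g h = 0 := by
    intro h hh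
    rw [hg, Finset.sum_apply]
    apply Finset.sum_eq_zero
    intro i _
    rw [Pi.single_apply, if_neg]
    intro e
    exact hh (by rw [e]; exact hfix_l i)
  have hsum_bdry : ∀ w : H → ZMod r, sumHom V r (bdry v r w) = ∑ h, w h := by
    intro w
    show ∑ u, bdry v r w u = _
    simp only [bdry_apply]
    exact Finset.sum_fiberwise Finset.univ v w
  have hbker : (-(bdry v r g)) ∈ (sumHom V r).ker := by
    rw [AddMonoidHom.mem_ker, map_neg, hsum_bdry, neg_eq_zero]
    have h2 : ∑ h, g h = ∑ i, (a i : ZMod r) := by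
      rw [hg]
      simp only [Finset.sum_apply]
      rw [Finset.sum_comm]
      refine Finset.sum_congr rfl fun i _ => ?_
      rw [Finset.sum_pi_single']
      simp
    rw [h2]
    exact ha
  obtain ⟨⟨w₁, hw₁A⟩, hw₁b⟩ := bdry'_surj v r hι hconn ⟨-(bdry v r g), hbker⟩
  have hw₁b' : bdry v r w₁ = -(bdry v r g) := congrArg Subtype.val hw₁b
  set w₀ : H → ZMod r := w₁ + g with hw₀
  have hw₀leg : ∀ i, w₀ (l i) = (a i : ZMod r) := by
    intro i
    show w₁ (l i) + g (l i) = _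
    rw [hw₁A.2 (l i) (hfix_l i), hg_leg, zero_add]
  have hw₀anti : ∀ h, ι h ≠ h → w₀ h + w₀ (ι h) = 0 := by
    intro h hh
    have hh' : ι (ι h) ≠ ι h := by rw [hι h]; exact fun e => hh e.symm
    show (w₁ h + g h) + (w₁ (ι h) + g (ι h)) = 0
    rw [hg_nonfix h hh, hg_nonfix (ι h) hh', add_zero, add_zero]
    exact hw₁A.1 h hh
  have hw₀vert : ∀ u, bdry v r w₀ u = 0 := by
    intro u
    rw [hw₀, map_add, hw₁b']
    simp
  -- exponent bookkeeping
  have hexp : (Finset.univ.filter fun h : H => ι h ≠ h).card / 2 = (Sset ι).card := by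
    rw [two_mul_card_Sset hι, Nat.mul_div_cancel_left _ (by norm_num : 0 < 2)]
  rw [hexp]
  -- the cardinality of the kernel
  have key : Nat.card ↥((bdry' v r hι).ker) = r ^ ((Sset ι).card + 1 - Fintype.card V) := by
    have hAsplit : Nat.card ↥(Asub r ι)
        = Nat.card ↥((sumHom V r).ker) * Nat.card ↥((bdry' v r hι).ker) := by
      rw [AddSubgroup.card_eq_card_quotient_mul_card_addSubgroup (bdry' v r hι).ker]
      congr 1
      exact Nat.card_congr
        (QuotientAddGroup.quotientKerEquivOfSurjective _ (bdry'_surj v r hι hconn)).toEquiv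
    have hVsplit : Nat.card (V → ZMod r)
        = Nat.card (ZMod r) * Nat.card ↥((sumHom V r).ker) := by
      rw [AddSubgroup.card_eq_card_quotient_mul_card_addSubgroup (sumHom V r).ker]
      congr 1
      refine Nat.card_congr (QuotientAddGroup.quotientKerEquivOfSurjective _ ?_).toEquiv
      intro c
      obtain ⟨u₀⟩ := hconn.nonempty
      refine ⟨Pi.single u₀ c, ?_⟩
      show ∑ u, Pi.single u₀ c u = c
      rw [Finset.sum_pi_single']
      simp
    have hmain : r ^ ((Sset ι).card + 1)
        = r ^ (Fintype.card V) * Nat.card ↥((bdry' v r hι).ker) := by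
      have h1 : r ^ (Sset ι).card
          = Nat.card ↥((sumHom V r).ker) * Nat.card ↥((bdry' v r hι).ker) := by
        rw [← card_Asub r hι]; exact hAsplit
      have h2 : Nat.card (V → ZMod r) = r ^ Fintype.card V := by
        rw [Nat.card_fun, Nat.card_zmod, Nat.card_eq_fintype_card]
      calc r ^ ((Sset ι).card + 1) = r * r ^ (Sset ι).card := by ring
        _ = r * (Nat.card ↥((sumHom V r).ker) * Nat.card ↥((bdry' v r hι).ker)) := by rw [h1]
        _ = (Nat.card (ZMod r) * Nat.card ↥((sumHom V r).ker)) * Nat.card ↥((bdry' v r hι).ker) := by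
            rw [Nat.card_zmod]; ring
        _ = Nat.card (V → ZMod r) * Nat.card ↥((bdry' v r hι).ker) := by rw [hVsplit]
        _ = r ^ (Fintype.card V) * Nat.card ↥((bdry' v r hι).ker) := by rw [h2]
    rcases eq_or_lt_of_le hr with h1 | h2
    · -- r = 1
      have hr1 : r = 1 := h1.symm
      subst hr1
      haveI : Unique ↥((bdry' v (1:ℕ) hι).ker) := uniqueOfSubsingleton 0
      rw [Nat.card_unique, one_pow]
    · -- 1 < r
      have hdvd : r ^ (Fintype.card V) ∣ r ^ ((Sset ι).card + 1) :=
        ⟨Nat.card ↥((bdry' v r hι).ker), hmain⟩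
      have hle : Fintype.card V ≤ (Sset ι).card + 1 :=
        (Nat.pow_dvd_pow_iff_le_right h2).1 hdvd
      have hsplit : r ^ ((Sset ι).card + 1)
          = r ^ (Fintype.card V) * r ^ ((Sset ι).card + 1 - Fintype.card V) := by
        rw [← pow_add]; congr 1; omega
      have hpos : 0 < r ^ Fintype.card V := pow_pos (by omega) _
      apply Nat.eq_of_mul_eq_mul_left hpos
      rw [← hmain, hsplit]
  rw [← key]
  apply Nat.card_congr
  refine
    { toFun := fun w => ⟨⟨w.1 - w₀, ?_⟩, ?_⟩
      invFun := fun x => ⟨x.1.1 + w₀, ?_⟩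
      left_inv := ?_
      right_inv := ?_ }
  · -- w - w₀ ∈ Asub
    refine ⟨fun h hh => ?_, fun h hh => ?_⟩
    · simp only [Pi.sub_apply]
      linear_combination w.2.2.1 h hh - hw₀anti h hh
    · obtain ⟨i, rfl⟩ := (hlegs h).1 hh
      simp only [Pi.sub_apply]
      rw [w.2.1 i, hw₀leg i, sub_self]
  · -- in the kernel
    rw [AddMonoidHom.mem_ker]
    apply Subtype.ext
    show bdry v r (w.1 - w₀) = 0
    rw [map_sub]
    funext u
    simp only [Pi.sub_apply, Pi.zero_apply]
    rw [show bdry v r w.1 u = 0 from w.2.2.2 u, hw₀vert, sub_zero]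
  · -- x + w₀ satisfies the conditions
    obtain ⟨⟨x, hxA⟩, hxk⟩ := x
    rw [AddMonoidHom.mem_ker] at hxk
    have hxb : bdry v r x = 0 := congrArg Subtype.val hxk
    refine ⟨fun i => ?_, fun h hh => ?_, fun u => ?_⟩
    · show x (l i) + w₀ (l i) = _
      rw [hxA.2 (l i) (hfix_l i), hw₀leg, zero_add]
    · show (x h + w₀ h) + (x (ι h) + w₀ (ι h)) = 0
      linear_combination hxA.1 h hh + hw₀anti h hh
    · show bdry v r (x + w₀) u = 0
      rw [map_add]
      simp only [Pi.add_apply]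
      rw [show bdry v r x u = 0 from congrFun hxb u, hw₀vert, add_zero]
  · intro w
    apply Subtype.ext
    show w.1 - w₀ + w₀ = w.1
    rw [sub_add_cancel]
  · intro x
    apply Subtype.ext
    apply Subtype.ext
    show x.1.1 + w₀ - w₀ = x.1.1
    rw [add_sub_cancel_right]
end
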